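/- arXiv:math/0312413 — 3 statements merged into one kernel-verified Lean document; each statement's English description precedes it below -/
import Mathlib

section
/- Let A be a commutative ring and let v₁, v₂, v₃, w₁, w₂, w₃ ∈ A² be such that for all i ≠ j the determinant det(vᵢ|vⱼ) is a unit of A, and likewise det(wᵢ|wⱼ) is a unit of A for all i ≠ j. Then there exists an invertible matrix B ∈ M₂(A) and units u₁, u₂, u₃ ∈ A^× such that B·vᵢ = uᵢ·wᵢ (as column vectors) for i = 1, 2, 3. -/
private lemma stmt0_aux {A : Type*} [CommRing A] (v : Fin 3 → Fin 2 → A)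
    (hv : ∀ i j : Fin 3, i ≠ j → IsUnit (v i 0 * v j 1 - v i 1 * v j 0)) :
    ∃ B : Matrix (Fin 2) (Fin 2) A, IsUnit B ∧
      ∃ u : Fin 3 → Aˣ, ∀ i : Fin 3,
        B.mulVec (v i) = (u i : A) • (![![1,0],![0,1],![1,1]] : Fin 3 → Fin 2 → A) i := by
  have hP := hv 0 1 (by decide)
  have hQ := hv 2 1 (by decide)
  have hR := hv 0 2 (by decide)
  set P := hP.unit
  set Q := hQ.unit
  set R := hR.unit
  have hp : (P : A) = v 0 0 * v 1 1 - v 0 1 * v 1 0 := hP.unit_spec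
  have hq : (v 2 0 * v 1 1 - v 2 1 * v 1 0) * (↑Q⁻¹ : A) = 1 := by
    rw [← hQ.unit_spec]; exact Units.mul_inv Q
  have hr : (v 0 0 * v 2 1 - v 0 1 * v 2 0) * (↑R⁻¹ : A) = 1 := by
    rw [← hR.unit_spec]; exact Units.mul_inv R
  set Bm : Matrix (Fin 2) (Fin 2) A :=
    ![![v 1 1 * ↑Q⁻¹, -(v 1 0) * ↑Q⁻¹], ![-(v 0 1) * ↑R⁻¹, v 0 0 * ↑R⁻¹]] with hBm
  refine ⟨Bm, ?_, ![P * Q⁻¹, P * R⁻¹, 1], ?_⟩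
  · rw [Matrix.isUnit_iff_isUnit_det]
    have hdet : Bm.det = ↑(P * Q⁻¹ * R⁻¹) := by
      rw [Matrix.det_fin_two, hBm]; simp [hp]; ring
    rw [hdet]; exact Units.isUnit _
  · intro i
    funext k
    fin_cases i <;> fin_cases k <;>
      simp [hBm, Matrix.mulVec, dotProduct, Fin.sum_univ_two, Units.val_mul, hp, Matrix.vecHead, Matrix.vecTail]
    · ring
    · ring
    · ring
    · ring
    · linear_combination hq
    · linear_combination hr

/-- Let `A` be a commutative ring and `v₁, v₂, v₃, w₁, w₂, w₃ ∈ A²`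
such that for all `i ≠ j` the determinants `det(vᵢ|vⱼ)` and `det(wᵢ|wⱼ)` are units of `A`.
Then there exists an invertible matrix `B ∈ M₂(A)` and units `u₁, u₂, u₃ ∈ Aˣ` such that
`B · vᵢ = uᵢ · wᵢ` for `i = 1, 2, 3`. -/
theorem stmt0 {A : Type*} [CommRing A] (v w : Fin 3 → Fin 2 → A)
    (hv : ∀ i j : Fin 3, i ≠ j → IsUnit (v i 0 * v j 1 - v i 1 * v j 0))
    (hw : ∀ i j : Fin 3, i ≠ j → IsUnit (w i 0 * w j 1 - w i 1 * w j 0)) :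
    ∃ B : Matrix (Fin 2) (Fin 2) A, IsUnit B ∧
      ∃ u : Fin 3 → Aˣ, ∀ i : Fin 3, B.mulVec (v i) = (u i : A) • w i := by
  obtain ⟨Bv, hBv, uv, huv⟩ := stmt0_aux v hv
  obtain ⟨Bw, hBw, uw, huw⟩ := stmt0_aux w hw
  obtain ⟨W, hW⟩ := hBw
  refine ⟨(↑W⁻¹ : Matrix (Fin 2) (Fin 2) A) * Bv, (Units.isUnit W⁻¹).mul hBv,
    fun i => uv i * (uw i)⁻¹, fun i => ?_⟩
  have h2 : w i = (uw i : A) • (↑W⁻¹ : Matrix (Fin 2) (Fin 2) A).mulVec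
      ((![![1,0],![0,1],![1,1]] : Fin 3 → Fin 2 → A) i) := by
    calc w i = (((W⁻¹ * W : (Matrix (Fin 2) (Fin 2) A)ˣ) : Matrix (Fin 2) (Fin 2) A)).mulVec (w i) := by
          simp
      _ = (↑W⁻¹ : Matrix (Fin 2) (Fin 2) A).mulVec (((W : Matrix (Fin 2) (Fin 2) A)).mulVec (w i)) := by
          rw [Units.val_mul, ← Matrix.mulVec_mulVec]
      _ = (↑W⁻¹ : Matrix (Fin 2) (Fin 2) A).mulVec ((uw i : A) •
            (![![1,0],![0,1],![1,1]] : Fin 3 → Fin 2 → A) i) := by rw [hW, huw i]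
      _ = (uw i : A) • (↑W⁻¹ : Matrix (Fin 2) (Fin 2) A).mulVec
            ((![![1,0],![0,1],![1,1]] : Fin 3 → Fin 2 → A) i) := Matrix.mulVec_smul _ _ _
  rw [← Matrix.mulVec_mulVec, huv i, Matrix.mulVec_smul, h2, smul_smul,
    Units.val_mul, mul_assoc, Units.inv_mul, mul_one]
end

section
/- Let A be a commutative ring and let v₁, v₂, v₃, w₁, w₂, w₃ ∈ A² be such that for all i ≠ j the determinant det(vᵢ|vⱼ) is a unit of A, and likewise det(wᵢ|wⱼ) is a unit of A for all i ≠ j. If B and B′ are invertible matrices in M₂(A) such that for each i = 1, 2, 3 there exist units uᵢ, u′ᵢ ∈ A^× with B·vᵢ = uᵢ·wᵢ and B′·vᵢ = u′ᵢ·wᵢ, then there exists a unit u ∈ A^× with B′ = u·B. -/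
/-- With `v₁, v₂, v₃, w₁, w₂, w₃ ∈ A²` such that all `det(vᵢ|vⱼ)` and
`det(wᵢ|wⱼ)` (`i ≠ j`) are units: if `B` and `B′` are invertible `2×2` matrices such that
for each `i` there are units `uᵢ, u′ᵢ` with `B·vᵢ = uᵢ·wᵢ` and `B′·vᵢ = u′ᵢ·wᵢ`, then
`B′ = u·B` for some unit `u ∈ Aˣ`. -/
theorem stmt1 {A : Type*} [CommRing A] (v w : Fin 3 → Fin 2 → A)
    (hv : ∀ i j : Fin 3, i ≠ j → IsUnit (v i 0 * v j 1 - v i 1 * v j 0))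
    (hw : ∀ i j : Fin 3, i ≠ j → IsUnit (w i 0 * w j 1 - w i 1 * w j 0))
    (B B' : Matrix (Fin 2) (Fin 2) A) (hB : IsUnit B) (hB' : IsUnit B')
    (hBvw : ∀ i : Fin 3, ∃ u : Aˣ, B.mulVec (v i) = (u : A) • w i)
    (hB'vw : ∀ i : Fin 3, ∃ u : Aˣ, B'.mulVec (v i) = (u : A) • w i) :
    ∃ u : Aˣ, B' = (u : A) • B := by
  classical
  choose u hu using hBvw
  choose u' hu' using hB'vw
  set l : Fin 3 → Aˣ := fun i => u' i * (u i)⁻¹ with hl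
  have hE : ∀ i, B'.mulVec (v i) = (l i : A) • B.mulVec (v i) := by
    intro i
    rw [hu i, hu' i, smul_smul, hl]
    congr 1
    push_cast
    exact (Units.inv_mul_cancel_right _ _).symm
  -- scalar form of the equations
  have e : ∀ i : Fin 3, ∀ k : Fin 2,
      B' k 0 * v i 0 + B' k 1 * v i 1 = (l i : A) * (B k 0 * v i 0 + B k 1 * v i 1) := by
    intro i k
    have h := congrFun (hE i) k
    simp only [Matrix.mulVec, dotProduct, Fin.sum_univ_two, Pi.smul_apply,
      smul_eq_mul, mul_add] at h
    linear_combination h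
  -- units
  have hd : IsUnit (v 0 0 * v 1 1 - v 0 1 * v 1 0) := hv 0 1 (by decide)
  have ha : IsUnit (v 2 0 * v 1 1 - v 2 1 * v 1 0) := by
    have h := hv 1 2 (by decide)
    have : v 2 0 * v 1 1 - v 2 1 * v 1 0 = -(v 1 0 * v 2 1 - v 1 1 * v 2 0) := by ring
    rw [this]; exact h.neg
  have hb : IsUnit (v 0 0 * v 2 1 - v 0 1 * v 2 0) := hv 0 2 (by decide)
  have hDt : IsUnit (B 0 0 * B 1 1 - B 0 1 * B 1 0) := by
    have := (Matrix.isUnit_iff_isUnit_det B).mp hB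
    rwa [Matrix.det_fin_two] at this
  -- cancellation helper
  have cancel : ∀ x y c : A, IsUnit c → c * (x - y) = 0 → x = y := by
    intro x y c hc h
    have h2 : c * (x - y) = c * 0 := by rw [h, mul_zero]
    exact sub_eq_zero.mp (hc.mul_left_cancel h2)
  -- B applied to the relation vector vanishes
  have g : ∀ k : Fin 2,
      (v 2 0 * v 1 1 - v 2 1 * v 1 0) * ((l 0 : A) - (l 2 : A)) * (B k 0 * v 0 0 + B k 1 * v 0 1)
      + (v 0 0 * v 2 1 - v 0 1 * v 2 0) * ((l 1 : A) - (l 2 : A)) * (B k 0 * v 1 0 + B k 1 * v 1 1)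
      = 0 := by
    intro k
    linear_combination (-(v 2 0 * v 1 1 - v 2 1 * v 1 0)) * e 0 k
      + (-(v 0 0 * v 2 1 - v 0 1 * v 2 0)) * e 1 k
      + (v 0 0 * v 1 1 - v 0 1 * v 1 0) * e 2 k
  -- the relation vector itself vanishes (cancel det B)
  have hz0 :
      (v 2 0 * v 1 1 - v 2 1 * v 1 0) * ((l 0 : A) - (l 2 : A)) * v 0 0
      + (v 0 0 * v 2 1 - v 0 1 * v 2 0) * ((l 1 : A) - (l 2 : A)) * v 1 0 = 0 := by
    refine cancel _ _ _ hDt ?_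
    linear_combination B 1 1 * g 0 - B 0 1 * g 1
  have hz1 :
      (v 2 0 * v 1 1 - v 2 1 * v 1 0) * ((l 0 : A) - (l 2 : A)) * v 0 1
      + (v 0 0 * v 2 1 - v 0 1 * v 2 0) * ((l 1 : A) - (l 2 : A)) * v 1 1 = 0 := by
    refine cancel _ _ _ hDt ?_
    linear_combination B 0 0 * g 1 - B 1 0 * g 0
  have h02 : (l 0 : A) = (l 2 : A) := by
    refine cancel _ _ ((v 2 0 * v 1 1 - v 2 1 * v 1 0) * (v 0 0 * v 1 1 - v 0 1 * v 1 0))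
      (ha.mul hd) ?_
    linear_combination v 1 1 * hz0 - v 1 0 * hz1
  have h12 : (l 1 : A) = (l 2 : A) := by
    refine cancel _ _ ((v 0 0 * v 2 1 - v 0 1 * v 2 0) * (v 0 0 * v 1 1 - v 0 1 * v 1 0))
      (hb.mul hd) ?_
    linear_combination v 0 0 * hz1 - v 0 1 * hz0
  -- conclude B' = l 2 • B entrywise
  refine ⟨l 2, ?_⟩
  ext k m
  have e0' := e 0 k; rw [h02] at e0'
  have e1' := e 1 k; rw [h12] at e1'
  have c0 : B' k 0 = (l 2 : A) * B k 0 := by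
    refine cancel _ _ _ hd ?_
    linear_combination v 1 1 * e0' - v 0 1 * e1'
  have c1 : B' k 1 = (l 2 : A) * B k 1 := by
    refine cancel _ _ _ hd ?_
    linear_combination v 0 0 * e1' - v 1 0 * e0'
  fin_cases m
  · simpa using c0
  · simpa using c1
end

section
/- Let A be an integral domain with fraction field K, and let B and C be integral domains that are A-algebras with injective structure maps, such that B and C are finite (module-finite) and flat as A-modules. Assume that Frac(B) ⊗_K Frac(C) is a field, where Frac(B) and Frac(C) are the fraction fields of B and C, viewed as K-algebras. Then B ⊗_A C is an integral domain, and its fraction field is isomorphic to Frac(B) ⊗_K Frac(C). -/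
set_option maxHeartbeats 1000000

open scoped TensorProduct



private lemma stmt8_aux {A C : Type*} [CommRing A] [IsDomain A] [CommRing C] [IsDomain C] [Algebra A C]
    (hAC : Function.Injective (algebraMap A C))
    [Module.Finite A C] [Module.Flat A C]
    (K M : Type*) [Field K] [Field M]
    [Algebra A K] [IsFractionRing A K]
    [Algebra C M] [IsFractionRing C M]
    [Algebra A M] [IsScalarTower A C M]
    [Algebra K M] [IsScalarTower A K M] :
    ∃ ψ0 : K ⊗[A] C ≃ₐ[K] M, ∀ (k : K) (c : C), ψ0 (k ⊗ₜ c) = k • algebraMap C M c := by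
  have hCM : Function.Injective (algebraMap C M) := IsFractionRing.injective C M
  let ψ0 : K ⊗[A] C →ₐ[K] M :=
    Algebra.TensorProduct.lift (Algebra.ofId K M) (IsScalarTower.toAlgHom A C M)
      (fun _ _ => Commute.all _ _)
  have hψ0_tmul : ∀ (k : K) (c : C), ψ0 (k ⊗ₜ c) = k • algebraMap C M c := by
    intro k c
    simp [ψ0, Algebra.smul_def, Algebra.ofId_apply]
  -- injectivity
  haveI hKflat : Module.Flat A K := IsLocalization.flat K (nonZeroDivisors A)
  have cs := IsLocalization.tensorProduct_compatibleSMul (nonZeroDivisors A) K K M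
  let e2 : K ⊗[A] M ≃ₗ[K] M :=
    (TensorProduct.equivOfCompatibleSMul A K K K M).symm ≪≫ₗ TensorProduct.lid K M
  have he2 : ∀ (k : K) (m : M), e2 (k ⊗ₜ m) = k • m := by
    intro k m
    show (TensorProduct.lid K M) ((TensorProduct.mapOfCompatibleSMul K A K K M) (k ⊗ₜ[A] m)) = k • m
    rw [TensorProduct.mapOfCompatibleSMul_tmul]
    simp
  have heq : ⇑ψ0 = ⇑e2 ∘ ⇑(LinearMap.lTensor K (IsScalarTower.toAlgHom A C M).toLinearMap) := by
    funext x
    induction x using TensorProduct.induction_on with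
    | zero => simp
    | tmul k c => simp [hψ0_tmul, he2]
    | add x y hx hy =>
      simp only [Function.comp_apply] at hx hy ⊢
      rw [map_add, map_add, map_add, hx, hy]
  have hψ0inj : Function.Injective ψ0 := by
    rw [heq]
    exact e2.injective.comp (Module.Flat.lTensor_preserves_injective_linearMap _ hCM)
  haveI hdomKC : IsDomain (K ⊗[A] C) := by
    haveI : Nontrivial (K ⊗[A] C) := by
      refine ⟨0, 1, fun h => ?_⟩
      have := congrArg ψ0 h
      simp at this
    exact Function.Injective.isDomain ψ0.toRingHom hψ0inj
  haveI : Algebra.IsIntegral K (K ⊗[A] C) := Algebra.IsIntegral.of_finite K _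
  have hfieldKC : IsField (K ⊗[A] C) :=
    (Algebra.IsIntegral.isField_iff_isField
      (RingHom.injective (algebraMap K (K ⊗[A] C)))).mp (Field.toIsField K)
  letI : Field (K ⊗[A] C) := hfieldKC.toField
  have hψ0surj : Function.Surjective ψ0 := by
    intro m
    obtain ⟨⟨c, t⟩, ht⟩ := IsLocalization.surj (nonZeroDivisors C) m
    have ht0 : algebraMap C M (t : C) ≠ 0 := by
      intro h
      exact nonZeroDivisors.ne_zero t.2 (hCM (by simpa using h))
    refine ⟨((1 : K) ⊗ₜ c) * ((1 : K) ⊗ₜ (t : C))⁻¹, ?_⟩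
    rw [map_mul, map_inv₀, hψ0_tmul, hψ0_tmul, one_smul, one_smul]
    field_simp
    exact ht.symm.trans (mul_comm _ _)
  exact ⟨AlgEquiv.ofBijective ψ0 ⟨hψ0inj, hψ0surj⟩, hψ0_tmul⟩


/-- Let `A` be an integral domain with fraction field `K`, and let `B`, `C`
be integral domains that are `A`-algebras with injective structure maps and which are finite
and flat as `A`-modules. Let `L = Frac(B)` and `M = Frac(C)`, viewed as `K`-algebras.
If `L ⊗_K M` is a field, then `B ⊗_A C` is an integral domain whose fraction field is
isomorphic to `L ⊗_K M`. -/
theorem stmt8 {A B C : Type*} [CommRing A] [IsDomain A] [CommRing B] [IsDomain B]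
    [CommRing C] [IsDomain C] [Algebra A B] [Algebra A C]
    (hAB : Function.Injective (algebraMap A B)) (hAC : Function.Injective (algebraMap A C))
    [Module.Finite A B] [Module.Flat A B] [Module.Finite A C] [Module.Flat A C]
    (K L M : Type*) [Field K] [Field L] [Field M]
    [Algebra A K] [IsFractionRing A K]
    [Algebra B L] [IsFractionRing B L] [Algebra C M] [IsFractionRing C M]
    [Algebra A L] [IsScalarTower A B L] [Algebra A M] [IsScalarTower A C M]
    [Algebra K L] [IsScalarTower A K L] [Algebra K M] [IsScalarTower A K M]
    (hfield : IsField (L ⊗[K] M)) :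
    IsDomain (B ⊗[A] C) ∧ Nonempty (FractionRing (B ⊗[A] C) ≃+* L ⊗[K] M) := by
  have hBL : Function.Injective (algebraMap B L) := IsFractionRing.injective B L
  have hCM : Function.Injective (algebraMap C M) := IsFractionRing.injective C M
  obtain ⟨ψ, hψ⟩ := stmt8_aux hAC K M
  -- the canonical map Φ : B ⊗[A] C → L ⊗[K] M
  let fB : B →ₐ[A] L ⊗[K] M :=
    ((Algebra.TensorProduct.includeLeft : L →ₐ[K] L ⊗[K] M).restrictScalars A).comp
      (IsScalarTower.toAlgHom A B L)
  let fC : C →ₐ[A] L ⊗[K] M :=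
    ((Algebra.TensorProduct.includeRight : M →ₐ[K] L ⊗[K] M).restrictScalars A).comp
      (IsScalarTower.toAlgHom A C M)
  let Φ : B ⊗[A] C →ₐ[A] L ⊗[K] M := Algebra.TensorProduct.productMap fB fC
  have hΦ_tmul : ∀ (b : B) (c : C),
      Φ (b ⊗ₜ c) = algebraMap B L b ⊗ₜ[K] algebraMap C M c := by
    intro b c
    simp [Φ, fB, fC, Algebra.TensorProduct.productMap_apply_tmul,
      Algebra.TensorProduct.tmul_mul_tmul]
  -- injectivity of Φ
  let g1 : B ⊗[A] C →ₗ[A] L ⊗[A] C :=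
    LinearMap.rTensor C (IsScalarTower.toAlgHom A B L).toLinearMap
  have hg1 : Function.Injective g1 :=
    Module.Flat.rTensor_preserves_injective_linearMap _ hBL
  let e2 : L ⊗[K] (K ⊗[A] C) ≃ₗ[K] L ⊗[A] C :=
    TensorProduct.AlgebraTensorModule.cancelBaseChange A K K L C
  let g3 : L ⊗[K] (K ⊗[A] C) ≃ₗ[K] L ⊗[K] M :=
    TensorProduct.congr (LinearEquiv.refl K L) ψ.toLinearEquiv
  have hΦeq : ⇑Φ = ⇑g3 ∘ ⇑e2.symm ∘ ⇑g1 := by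
    funext x
    induction x using TensorProduct.induction_on with
    | zero =>
      show Φ 0 = g3 (e2.symm (g1 0))
      rw [map_zero Φ, LinearMap.map_zero g1, LinearEquiv.map_zero, LinearEquiv.map_zero]
    | tmul b c =>
      simp only [Function.comp_apply, hΦ_tmul, g1, LinearMap.rTensor_tmul, AlgHom.toLinearMap_apply,
        IsScalarTower.coe_toAlgHom', e2,
        TensorProduct.AlgebraTensorModule.cancelBaseChange_symm_tmul, g3,
        TensorProduct.congr_tmul, LinearEquiv.refl_apply, AlgEquiv.toLinearEquiv_apply, hψ,
        one_smul]
    | add x y hx hy =>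
      simp only [Function.comp_apply] at hx hy ⊢
      rw [map_add, map_add, map_add, map_add, hx, hy]
  have hΦinj : Function.Injective Φ := by
    rw [hΦeq]
    exact g3.injective.comp (e2.symm.injective.comp hg1)
  -- L ⊗[K] M is a domain
  haveI hdomLM : IsDomain (L ⊗[K] M) := by
    letI := hfield.toField
    exact inferInstance
  haveI hdom : IsDomain (B ⊗[A] C) := Function.Injective.isDomain Φ.toRingHom hΦinj
  refine ⟨hdom, ?_⟩
  -- set up the algebra structure via Φ and show it is a fraction ring
  letI : Algebra (B ⊗[A] C) (L ⊗[K] M) := Φ.toRingHom.toAlgebra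
  have halg : ⇑(algebraMap (B ⊗[A] C) (L ⊗[K] M)) = ⇑Φ := rfl
  haveI : IsFractionRing (B ⊗[A] C) (L ⊗[K] M) := by
    refine ⟨?_, ?_, ?_⟩
    · rintro ⟨y, hy⟩
      have hy0 : y ≠ 0 := nonZeroDivisors.ne_zero hy
      have : Φ y ≠ 0 := fun h => hy0 (hΦinj (by rw [h, map_zero]))
      obtain ⟨u, hu⟩ := hfield.mul_inv_cancel this
      exact IsUnit.of_mul_eq_one u hu
    · intro z
      induction z using TensorProduct.induction_on with
      | zero => exact ⟨⟨0, 1⟩, by simp⟩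
      | tmul l m =>
        obtain ⟨⟨b, s⟩, hb⟩ := IsLocalization.surj (nonZeroDivisors B) l
        obtain ⟨⟨c, t⟩, hc⟩ := IsLocalization.surj (nonZeroDivisors C) m
        have hsne : algebraMap B L (s : B) ≠ 0 := fun h =>
          nonZeroDivisors.ne_zero s.2 (hBL (by simpa using h))
        have htne : algebraMap C M (t : C) ≠ 0 := fun h =>
          nonZeroDivisors.ne_zero t.2 (hCM (by simpa using h))
        have hu : IsUnit (algebraMap B L (s : B) ⊗ₜ[K] algebraMap C M (t : C)) := by
          have h1 : (algebraMap B L (s : B) ⊗ₜ[K] (1 : M)) * ((1 : L) ⊗ₜ[K] algebraMap C M (t : C))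
              = algebraMap B L (s : B) ⊗ₜ[K] algebraMap C M (t : C) := by
            rw [Algebra.TensorProduct.tmul_mul_tmul, mul_one, one_mul]
          rw [← h1]
          exact ((isUnit_iff_ne_zero.mpr hsne).map
              (Algebra.TensorProduct.includeLeft : L →ₐ[K] L ⊗[K] M)).mul
            ((isUnit_iff_ne_zero.mpr htne).map
              (Algebra.TensorProduct.includeRight : M →ₐ[K] L ⊗[K] M))
        have hst : ((s : B) ⊗ₜ[A] (t : C)) ∈ nonZeroDivisors (B ⊗[A] C) := by
          refine mem_nonZeroDivisors_of_ne_zero (fun h => ?_)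
          apply hu.ne_zero
          rw [← hΦ_tmul, h, map_zero]
        refine ⟨⟨b ⊗ₜ c, ⟨_, hst⟩⟩, ?_⟩
        rw [halg, hΦ_tmul, hΦ_tmul, Algebra.TensorProduct.tmul_mul_tmul, hb, hc]
      | add x y hx hy =>
        obtain ⟨⟨x1, s1⟩, h1⟩ := hx
        obtain ⟨⟨x2, s2⟩, h2⟩ := hy
        refine ⟨⟨x1 * (s2 : B ⊗[A] C) + x2 * (s1 : B ⊗[A] C), s1 * s2⟩, ?_⟩
        rw [halg] at h1 h2 ⊢
        simp only [Submonoid.coe_mul, map_add, map_mul]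
        rw [← h1, ← h2]
        ring
    · intro x y h
      rw [halg] at h
      exact ⟨1, by rw [hΦinj h]⟩
  exact ⟨(IsLocalization.algEquiv (nonZeroDivisors (B ⊗[A] C))
    (FractionRing (B ⊗[A] C)) (L ⊗[K] M)).toRingEquiv⟩
end
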